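/- Let F be a finite field of odd characteristic, ψ : F → ℂ^× a nontrivial additive character, and m, n ≥ 1. Let Ω ∈ Mat_{2n}(F) be invertible with Ωᵀ = −Ω. Then for every function f : Mat_{2n×m}(F) → ℂ the following are equivalent: (i) for every B ∈ Mat_m(F) with Bᵀ = −B and every T ∈ Mat_{2n×m}(F), ψ(2⁻¹ · tr(Tᵀ Ω T B)) · f(T) = f(T); (ii) f(T) = 0 for every T ∈ Mat_{2n×m}(F) with Tᵀ Ω T ≠ 0, i.e. f is supported on the moment cone of matrices whose column span is isotropic for the alternating form with Gram matrix Ω. -/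

import Mathlib

open Matrix

lemma trace_mul_sbm {R : Type*} [CommRing R] {m : ℕ} (A : Matrix (Fin m) (Fin m) R)
    (i j : Fin m) (c : R) : (A * Matrix.single j i c).trace = A i j * c := by
  simp [Matrix.trace, Matrix.diag, Matrix.mul_apply, Matrix.single, ite_and]

/-- Let `F` be a finite field of odd characteristic, `ψ` a nontrivial additive
character of `F`, and `Ω` an invertible skew-symmetric `2n × 2n` matrix.  A function
`f` on `Mat_{2n×m}(F)` satisfies `ψ(2⁻¹ tr(Tᵀ Ω T B)) f(T) = f(T)` for every
skew-symmetric `B ∈ Mat_m(F)` and every `T` iff `f` is supported on the moment cone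
`{T : Tᵀ Ω T = 0}`. -/
theorem twist_invariant_iff_supported_on_momentCone
    {F : Type*} [Field F] [Fintype F] (hchar : Odd (ringChar F))
    (ψ : AddChar F ℂ) (hψ : ∃ a, ψ a ≠ 1)
    {m n : ℕ} (hm : 1 ≤ m) (hn : 1 ≤ n)
    (Ω : Matrix (Fin (2 * n)) (Fin (2 * n)) F) (hΩ : IsUnit Ω) (hskew : Ωᵀ = -Ω)
    (f : Matrix (Fin (2 * n)) (Fin m) F → ℂ) :
    (∀ B : Matrix (Fin m) (Fin m) F, Bᵀ = -B →
      ∀ T : Matrix (Fin (2 * n)) (Fin m) F,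
        ψ ((2 : F)⁻¹ * (Tᵀ * Ω * T * B).trace) * f T = f T) ↔
    (∀ T : Matrix (Fin (2 * n)) (Fin m) F, Tᵀ * Ω * T ≠ 0 → f T = 0) := by
  have h2 : (2 : F) ≠ 0 := by
    intro h
    have hd : ringChar F ∣ 2 := (ringChar.spec F 2).mp (by exact_mod_cast h)
    have h1 : ringChar F ≠ 1 := CharP.ringChar_ne_one
    rcases (Nat.dvd_prime Nat.prime_two).mp hd with h' | h'
    · exact h1 h'
    · rw [h', Nat.odd_iff] at hchar; omega
  constructor
  · intro H T hT
    set A : Matrix (Fin m) (Fin m) F := Tᵀ * Ω * T with hA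
    have hAskew : Aᵀ = -A := by
      simp only [hA, Matrix.transpose_mul, Matrix.transpose_transpose, hskew]
      rw [← Matrix.mul_assoc]
      simp [Matrix.mul_assoc]
    obtain ⟨i, j, hij⟩ : ∃ i j, A i j ≠ 0 := by
      by_contra h
      push_neg at h
      exact hT (by ext i j; simp [← hA, h])
    obtain ⟨a, ha⟩ := hψ
    set c : F := (A i j)⁻¹ * a with hc
    set B : Matrix (Fin m) (Fin m) F :=
      Matrix.single j i c - Matrix.single i j c with hB
    have hBskew : Bᵀ = -B := by
      ext x y
      simp [hB, Matrix.single, and_comm]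
    have hji : A j i = -A i j := by
      have := congrFun (congrFun hAskew i) j
      simpa [Matrix.transpose_apply] using this
    have htr : (A * B).trace = 2 * A i j * c := by
      rw [hB, Matrix.mul_sub, Matrix.trace_sub, trace_mul_sbm, trace_mul_sbm, hji]
      ring
    have := H B hBskew T
    rw [← hA, htr] at this
    have hval : (2 : F)⁻¹ * (2 * A i j * c) = a := by
      rw [hc]
      field_simp
    rw [hval] at this
    by_contra hf
    apply ha
    apply mul_right_cancel₀ hf
    rw [this, one_mul]
  · intro H B hB T
    by_cases hT : Tᵀ * Ω * T = 0
    · rw [hT]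
      simp
    · rw [H T hT]
      simp
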